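/- Assume M₁ is positive definite and the Lagrangian l has a saddle point (x*, z*, y*). Let (xᵏ, zᵏ, yᵏ)_{k≥0} be a sequence generated by the AD-PMM algorithm. Then Σ_{k≥1} ‖x^{k+1} − xᵏ‖² < +∞, Σ_{k≥1} ‖y^{k+1} − yᵏ‖² < +∞, Σ_{k≥1} ‖z^{k+1} − zᵏ‖² < +∞, and there exists C ≥ 0 such that ‖Axᵏ − zᵏ‖ ≤ C/√k for all k ≥ 1. -/

import Mathlib

open scoped InnerProductSpace
open Filter

noncomputable section

section OpDefs

variable {E F : Type*} [NormedAddCommGroup E] [InnerProductSpace ℝ E]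
  [NormedAddCommGroup F] [InnerProductSpace ℝ F]

/-- `U ∈ S₊(E)`: continuous linear, self-adjoint and positive semidefinite. -/
def IsSplusOp (U : E →L[ℝ] E) : Prop :=
  (∀ x y : E, ⟪U x, y⟫_ℝ = ⟪x, U y⟫_ℝ) ∧ ∀ x : E, 0 ≤ ⟪x, U x⟫_ℝ

/-- The squared seminorm `‖x‖²_U := ⟪x, U x⟫`. -/
def opSq (U : E →L[ℝ] E) (x : E) : ℝ := ⟪x, U x⟫_ℝ

/-- Loewner order `U ⪰ V`. -/
def opLE (U V : E →L[ℝ] E) : Prop := ∀ x : E, ⟪x, V x⟫_ℝ ≤ ⟪x, U x⟫_ℝ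

/-- `U ∈ P_α(E)`, i.e. `U ∈ S₊(E)` and `U ⪰ α·Id`. -/
def IsPalphaOp (α : ℝ) (U : E →L[ℝ] E) : Prop :=
  IsSplusOp U ∧ ∀ x : E, α * ‖x‖ ^ 2 ≤ ⟪x, U x⟫_ℝ

/-- Properness of an extended-real-valued function. -/
def ERealProper (f : E → EReal) : Prop := (∀ x, f x ≠ ⊥) ∧ ∃ x, f x ≠ ⊤

/-- Convexity of an extended-real-valued function. -/
def ERealConvex (f : E → EReal) : Prop :=
  ∀ x y : E, ∀ a b : ℝ, 0 ≤ a → 0 ≤ b → a + b = 1 →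
    f (a • x + b • y) ≤ (a : EReal) * f x + (b : EReal) * f y

/-- Weak convergence of a sequence in a Hilbert space, tested against inner products. -/
def WeakConv (u : ℕ → E) (p : E) : Prop :=
  ∀ w : E, Tendsto (fun k => ⟪u k, w⟫_ℝ) atTop (nhds ⟪p, w⟫_ℝ)

/-- The Lagrangian `l(x,z,y) = f(x) + g(z) + ⟪y, Ax - z⟫`. -/
def Lagr (f : E → EReal) (g : F → EReal) (A : E →L[ℝ] F) (p : E) (q v : F) : EReal :=
  f p + g q + ((⟪v, A p - q⟫_ℝ : ℝ) : EReal)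

/-- The Lagrangian with an additional smooth summand `h`:
`l(x,z,y) = f(x) + h(x) + g(z) + ⟪y, Ax - z⟫`. -/
def LagrH (f : E → EReal) (h : E → ℝ) (g : F → EReal) (A : E →L[ℝ] F)
    (p : E) (q v : F) : EReal :=
  f p + ((h p : ℝ) : EReal) + g q + ((⟪v, A p - q⟫_ℝ : ℝ) : EReal)

/-- `(xs, zs, ys)` is a saddle point of `l`. -/
def IsSaddle (l : E → F → F → EReal) (xs : E) (zs ys : F) : Prop :=
  ∀ (p : E) (q v : F), l xs zs v ≤ l xs zs ys ∧ l xs zs ys ≤ l p q ys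

/-- `xk1` is a minimizer of `u ↦ f u + (c/2)‖Au - zk + c⁻¹ yk‖² + (1/2)‖u - xk‖²_M`. -/
def IsXUpdate (f : E → EReal) (A : E →L[ℝ] F) (c : ℝ) (M : E →L[ℝ] E)
    (xk : E) (zk yk : F) (xk1 : E) : Prop :=
  ∀ u : E,
    f xk1 + (((c/2) * ‖A xk1 - zk + c⁻¹ • yk‖ ^ 2 + (1/2) * opSq M (xk1 - xk) : ℝ) : EReal) ≤
    f u + (((c/2) * ‖A u - zk + c⁻¹ • yk‖ ^ 2 + (1/2) * opSq M (u - xk) : ℝ) : EReal)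

/-- `xk1` is a minimizer of the `x`-subproblem with linearized smooth part:
`u ↦ f u + ⟪u - xk, ∇h(xk)⟫ + (c/2)‖Au - zk + c⁻¹ yk‖² + (1/2)‖u - xk‖²_M`. -/
def IsXUpdateGrad (f : E → EReal) (h' : E → E) (A : E →L[ℝ] F) (c : ℝ) (M : E →L[ℝ] E)
    (xk : E) (zk yk : F) (xk1 : E) : Prop :=
  ∀ u : E,
    f xk1 + ((⟪xk1 - xk, h' xk⟫_ℝ + (c/2) * ‖A xk1 - zk + c⁻¹ • yk‖ ^ 2
        + (1/2) * opSq M (xk1 - xk) : ℝ) : EReal) ≤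
    f u + ((⟪u - xk, h' xk⟫_ℝ + (c/2) * ‖A u - zk + c⁻¹ • yk‖ ^ 2
        + (1/2) * opSq M (u - xk) : ℝ) : EReal)

/-- `zk1` is a minimizer of `w ↦ g w + (c/2)‖Ax - w + c⁻¹ yk‖² + (1/2)‖w - zk‖²_M`. -/
def IsZUpdate (g : F → EReal) (c : ℝ) (M : F →L[ℝ] F)
    (Ax zk yk zk1 : F) : Prop :=
  ∀ w : F,
    g zk1 + (((c/2) * ‖Ax - zk1 + c⁻¹ • yk‖ ^ 2 + (1/2) * opSq M (zk1 - zk) : ℝ) : EReal) ≤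
    g w + (((c/2) * ‖Ax - w + c⁻¹ • yk‖ ^ 2 + (1/2) * opSq M (w - zk) : ℝ) : EReal)

end OpDefs

section Aux

variable {E F : Type*} [NormedAddCommGroup E] [InnerProductSpace ℝ E]
  [NormedAddCommGroup F] [InnerProductSpace ℝ F]

lemma opSq_nonneg {U : E →L[ℝ] E} (hU : IsSplusOp U) (x : E) : 0 ≤ opSq U x := hU.2 x

lemma inner_opSq {U : E →L[ℝ] E} (hU : IsSplusOp U) (x : E) : ⟪U x, x⟫_ℝ = opSq U x := hU.1 x x

lemma opSq_neg (U : E →L[ℝ] E) (x : E) : opSq U (-x) = opSq U x := by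
  simp [opSq, inner_neg_neg]

lemma opSq_add {U : E →L[ℝ] E} (hU : IsSplusOp U) (a b : E) :
    opSq U (a + b) = opSq U a + 2 * ⟪U a, b⟫_ℝ + opSq U b := by
  have h1 : ⟪a, U b⟫_ℝ = ⟪U a, b⟫_ℝ := (hU.1 a b).symm
  have h2 : ⟪b, U a⟫_ℝ = ⟪U a, b⟫_ℝ := real_inner_comm (U a) b
  simp only [opSq, map_add, inner_add_left, inner_add_right, h1, h2]
  ring

lemma opSq_sub {U : E →L[ℝ] E} (hU : IsSplusOp U) (a b : E) :
    opSq U (a - b) = opSq U a - 2 * ⟪U a, b⟫_ℝ + opSq U b := by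
  have := opSq_add hU a (-b)
  simpa [inner_neg_right, opSq_neg, sub_eq_add_neg] using this

lemma opSq_smul {U : E →L[ℝ] E} (t : ℝ) (a : E) : opSq U (t • a) = t^2 * opSq U a := by
  simp [opSq, map_smul, real_inner_smul_left, real_inner_smul_right]; ring

lemma opSq_cs {U : E →L[ℝ] E} (hU : IsSplusOp U) (a b : E) :
    2 * ⟪U a, b⟫_ℝ ≤ opSq U a + opSq U b := by
  have h := opSq_nonneg hU (a - b)
  rw [opSq_sub hU] at h; linarith

lemma ereal_real {a : EReal} (h1 : a ≠ ⊥) (h2 : a ≠ ⊤) : ∃ r : ℝ, a = (r : EReal) :=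
  ⟨a.toReal, (EReal.coe_toReal h2 h1).symm⟩

lemma le_of_small_step {a b R : ℝ} (hR : 0 ≤ R)
    (h : ∀ t : ℝ, 0 < t → t ≤ 1 → a ≤ b + t * R) : a ≤ b := by
  refine le_of_forall_pos_le_add fun ε hε => ?_
  have ht0 : 0 < min 1 (ε / (R + 1)) := lt_min one_pos (div_pos hε (by linarith))
  have := h _ ht0 (min_le_left _ _)
  have h2 : min 1 (ε / (R + 1)) * R ≤ (ε / (R + 1)) * R :=
    mul_le_mul_of_nonneg_right (min_le_right _ _) hR
  have h3 : (ε / (R + 1)) * R ≤ ε := by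
    rw [div_mul_eq_mul_div, div_le_iff₀ (by linarith : (0:ℝ) < R + 1)]
    nlinarith
  linarith

end Aux

section Subgrad

variable {E F : Type*} [NormedAddCommGroup E] [InnerProductSpace ℝ E]
  [NormedAddCommGroup F] [InnerProductSpace ℝ F]

lemma key_subgrad (f : E → EReal) (hconv : ERealConvex f)
    (B : E →L[ℝ] F) (b₀ : F) (c : ℝ) (hc : 0 < c)
    (M : E →L[ℝ] E) (hM : IsSplusOp M) (xk x1 : E)
    (hmin : ∀ u : E,
      f x1 + (((c/2) * ‖B x1 + b₀‖ ^ 2 + (1/2) * opSq M (x1 - xk) : ℝ) : EReal) ≤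
      f u + (((c/2) * ‖B u + b₀‖ ^ 2 + (1/2) * opSq M (u - xk) : ℝ) : EReal))
    {r1 ru : ℝ} {u : E} (hx1 : f x1 = (r1 : EReal)) (hu : f u = (ru : EReal)) :
    r1 ≤ ru + (c * ⟪B x1 + b₀, B (u - x1)⟫_ℝ + ⟪M (x1 - xk), u - x1⟫_ℝ) := by
  set d := u - x1 with hd
  set L : ℝ := c * ⟪B x1 + b₀, B d⟫_ℝ + ⟪M (x1 - xk), d⟫_ℝ with hL
  set R : ℝ := (c/2) * ‖B d‖ ^ 2 + (1/2) * opSq M d with hR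
  have hRnn : 0 ≤ R := by
    have := opSq_nonneg hM d
    have : (0:ℝ) ≤ (c/2) * ‖B d‖^2 := by positivity
    have := opSq_nonneg hM d
    rw [hR]; positivity
  refine le_of_small_step hRnn fun t ht0 ht1 => ?_
  have hpt : (1 - t) • x1 + t • u = x1 + t • d := by rw [hd]; module
  have hcv := hconv x1 u (1 - t) t (by linarith) (le_of_lt ht0) (by ring)
  rw [hpt, hx1, hu] at hcv
  have hcv' : f (x1 + t • d) ≤ (((1 - t) * r1 + t * ru : ℝ) : EReal) := by
    rw [EReal.coe_add, EReal.coe_mul, EReal.coe_mul] at *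
    exact hcv
  have hm := hmin (x1 + t • d)
  rw [hx1] at hm
  -- quadratic expansion
  have hB : B (x1 + t • d) + b₀ = (B x1 + b₀) + t • B d := by
    rw [map_add, map_smul]; abel
  have hX : x1 + t • d - xk = (x1 - xk) + t • d := by abel
  have hQ : (c/2) * ‖B (x1 + t • d) + b₀‖ ^ 2 + (1/2) * opSq M (x1 + t • d - xk)
      = ((c/2) * ‖B x1 + b₀‖ ^ 2 + (1/2) * opSq M (x1 - xk)) + t * L + t^2 * R := by
    rw [hB, hX, norm_add_sq_real, opSq_add hM, real_inner_smul_right, norm_smul,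
      mul_pow, real_inner_smul_right, opSq_smul, hL, hR]
    simp [sq_abs]
    ring
  set Q1 : ℝ := (c/2) * ‖B x1 + b₀‖ ^ 2 + (1/2) * opSq M (x1 - xk) with hQ1
  have hm2 : ((r1 + Q1 : ℝ) : EReal) ≤ (((1 - t) * r1 + t * ru + (Q1 + t * L + t^2 * R) : ℝ) : EReal) := by
    calc ((r1 + Q1 : ℝ) : EReal) = (r1 : EReal) + (Q1 : ℝ) := by rw [EReal.coe_add]
    _ ≤ f (x1 + t • d) + (((c/2) * ‖B (x1 + t • d) + b₀‖ ^ 2 + (1/2) * opSq M (x1 + t • d - xk) : ℝ) : EReal) := hm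
    _ ≤ (((1 - t) * r1 + t * ru : ℝ) : EReal) + (((c/2) * ‖B (x1 + t • d) + b₀‖ ^ 2 + (1/2) * opSq M (x1 + t • d - xk) : ℝ) : EReal) :=
        add_le_add_left hcv' _
    _ = (((1 - t) * r1 + t * ru + (Q1 + t * L + t^2 * R) : ℝ) : EReal) := by
        rw [hQ, ← EReal.coe_add]
  have hreal : r1 + Q1 ≤ (1 - t) * r1 + t * ru + (Q1 + t * L + t^2 * R) := by
    exact_mod_cast hm2
  have hdiv : t * r1 ≤ t * (ru + L + t * R) := by nlinarith
  have := (mul_le_mul_iff_right₀ ht0).mp hdiv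
  linarith

end Subgrad

section Cores

variable {E F : Type*} [NormedAddCommGroup E] [InnerProductSpace ℝ E]
  [NormedAddCommGroup F] [InnerProductSpace ℝ F]

lemma descent_core (M₁ : E →L[ℝ] E) (M₂ : F →L[ℝ] F)
    (hM₁ : IsSplusOp M₁) (hM₂ : IsSplusOp M₂) (c : ℝ) (hc : 0 < c)
    (u v : E) (a b p q w : F)
    (h1 : 0 ≤ c⁻¹ * ⟪b, a⟫_ℝ + c * ⟪p, q⟫_ℝ - ⟪p, a⟫_ℝ + ⟪M₁ u, v⟫_ℝ + ⟪M₂ p, q⟫_ℝ)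
    (h2 : 0 ≤ ⟪a, p⟫_ℝ + ⟪M₂ w, p⟫_ℝ - ⟪M₂ p, p⟫_ℝ) :
    c⁻¹ * ‖b‖^2 + c * ‖q‖^2 + opSq M₁ v + opSq M₂ q + opSq M₂ p
      + (c⁻¹ * ‖a‖^2 + c * ‖p‖^2 + opSq M₁ u + opSq M₂ p)
    ≤ c⁻¹ * ‖a + b‖^2 + c * ‖p + q‖^2 + opSq M₁ (u + v) + opSq M₂ (p + q) + opSq M₂ w := by
  have e1 : c⁻¹ * ‖a + b‖^2 = c⁻¹ * ‖a‖^2 + c⁻¹ * (2 * ⟪a, b⟫_ℝ) + c⁻¹ * ‖b‖^2 := by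
    rw [norm_add_sq_real]; ring
  have e2 : c * ‖p + q‖^2 = c * ‖p‖^2 + c * (2 * ⟪p, q⟫_ℝ) + c * ‖q‖^2 := by
    rw [norm_add_sq_real]; ring
  have e3 := opSq_add hM₁ u v
  have e4 := opSq_add hM₂ p q
  have e5 := opSq_sub hM₂ w p
  have hs : 0 ≤ opSq M₂ (w - p) := opSq_nonneg hM₂ _
  have c1 : c⁻¹ * ⟪a, b⟫_ℝ = c⁻¹ * ⟪b, a⟫_ℝ := by rw [real_inner_comm]
  have c2 : ⟪a, p⟫_ℝ = ⟪p, a⟫_ℝ := real_inner_comm p a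
  have c3 : ⟪M₂ p, p⟫_ℝ = opSq M₂ p := inner_opSq hM₂ p
  linarith

lemma mono_core (M₁ : E →L[ℝ] E) (M₂ : F →L[ℝ] F)
    (hM₁ : IsSplusOp M₁) (hM₂ : IsSplusOp M₂) (c : ℝ) (hc : 0 < c)
    (u₁ u₂ : E) (a₁ a₂ p₁ p₂ : F)
    (hI : 0 ≤ ⟪-a₂ + c • (p₁ - p₂), p₂ + c⁻¹ • (a₂ - a₁)⟫_ℝ + ⟪M₁ (u₁ - u₂), u₂⟫_ℝ)
    (hII : 0 ≤ ⟪a₂, p₂⟫_ℝ + ⟪M₂ p₁, p₂⟫_ℝ - ⟪M₂ p₂, p₂⟫_ℝ) :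
    c⁻¹ * ‖a₂‖^2 + c * ‖p₂‖^2 + opSq M₁ u₂ + opSq M₂ p₂
      ≤ c⁻¹ * ‖a₁‖^2 + c * ‖p₁‖^2 + opSq M₁ u₁ + opSq M₂ p₁ := by
  have hcne : c ≠ 0 := hc.ne'
  have hIexp : ⟪-a₂ + c • (p₁ - p₂), p₂ + c⁻¹ • (a₂ - a₁)⟫_ℝ
      = -⟪a₂, p₂⟫_ℝ - c⁻¹ * ⟪a₂, a₂⟫_ℝ + c⁻¹ * ⟪a₂, a₁⟫_ℝ + c * ⟪p₁, p₂⟫_ℝ + ⟪p₁, a₂⟫_ℝ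
        - ⟪p₁, a₁⟫_ℝ - c * ⟪p₂, p₂⟫_ℝ - ⟪p₂, a₂⟫_ℝ + ⟪p₂, a₁⟫_ℝ := by
    simp only [inner_add_left, inner_add_right, inner_neg_left, inner_sub_left, inner_sub_right,
      real_inner_smul_left, real_inner_smul_right]
    field_simp
    ring
  have hM1e : ⟪M₁ (u₁ - u₂), u₂⟫_ℝ = ⟪M₁ u₁, u₂⟫_ℝ - opSq M₁ u₂ := by
    rw [map_sub, inner_sub_left, inner_opSq hM₁]
  have csM1 := opSq_cs hM₁ u₁ u₂
  have csM2 := opSq_cs hM₂ p₁ p₂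
  have c3 : ⟪M₂ p₂, p₂⟫_ℝ = opSq M₂ p₂ := inner_opSq hM₂ p₂
  have hs : 0 ≤ c * ‖c⁻¹ • (a₁ - a₂) + (p₁ - p₂)‖^2 := by positivity
  have hsexp : c * ‖c⁻¹ • (a₁ - a₂) + (p₁ - p₂)‖^2
      = c⁻¹ * ⟪a₁, a₁⟫_ℝ - 2 * (c⁻¹ * ⟪a₂, a₁⟫_ℝ) + c⁻¹ * ⟪a₂, a₂⟫_ℝ
        + 2 * ⟪a₁, p₁⟫_ℝ - 2 * ⟪a₁, p₂⟫_ℝ - 2 * ⟪a₂, p₁⟫_ℝ + 2 * ⟪a₂, p₂⟫_ℝ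
        + c * ⟪p₁, p₁⟫_ℝ - 2 * (c * ⟪p₁, p₂⟫_ℝ) + c * ⟪p₂, p₂⟫_ℝ := by
    rw [norm_add_sq_real, norm_smul, Real.norm_eq_abs, abs_of_pos (inv_pos.mpr hc),
      norm_sub_sq_real, real_inner_smul_left]
    simp only [inner_sub_left, inner_sub_right, real_inner_self_eq_norm_sq]
    rw [mul_pow, norm_sub_sq_real a₁ a₂, real_inner_comm a₂ a₁]
    field_simp
    ring
  have sa1 : c⁻¹ * ‖a₁‖^2 = c⁻¹ * ⟪a₁, a₁⟫_ℝ := by rw [real_inner_self_eq_norm_sq]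
  have sa2 : c⁻¹ * ‖a₂‖^2 = c⁻¹ * ⟪a₂, a₂⟫_ℝ := by rw [real_inner_self_eq_norm_sq]
  have sp1 : c * ‖p₁‖^2 = c * ⟪p₁, p₁⟫_ℝ := by rw [real_inner_self_eq_norm_sq]
  have sp2 : c * ‖p₂‖^2 = c * ⟪p₂, p₂⟫_ℝ := by rw [real_inner_self_eq_norm_sq]
  have cm1 : ⟪a₁, p₁⟫_ℝ = ⟪p₁, a₁⟫_ℝ := real_inner_comm _ _
  have cm2 : ⟪a₁, p₂⟫_ℝ = ⟪p₂, a₁⟫_ℝ := real_inner_comm _ _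
  have cm3 : ⟪a₂, p₁⟫_ℝ = ⟪p₁, a₂⟫_ℝ := real_inner_comm _ _
  have cm4 : ⟪a₂, p₂⟫_ℝ = ⟪p₂, a₂⟫_ℝ := real_inner_comm _ _
  linarith

end Cores

section PD

variable {E : Type*} [NormedAddCommGroup E] [InnerProductSpace ℝ E]

lemma pd_uniform [FiniteDimensional ℝ E] (M : E →L[ℝ] E)
    (h : ∀ w : E, w ≠ 0 → 0 < ⟪w, M w⟫_ℝ) :
    ∃ α : ℝ, 0 < α ∧ ∀ w : E, α * ‖w‖^2 ≤ ⟪w, M w⟫_ℝ := by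
  rcases subsingleton_or_nontrivial E with hE | hE
  · exact ⟨1, one_pos, fun w => by rw [Subsingleton.elim w 0]; simp⟩
  · have hcont : Continuous fun w : E => ⟪w, M w⟫_ℝ := continuous_id.inner M.continuous
    have hne : (Metric.sphere (0:E) 1).Nonempty := NormedSpace.sphere_nonempty.mpr zero_le_one
    obtain ⟨w₀, hw₀mem, hmin'⟩ :=
      (isCompact_sphere (0:E) 1).exists_isMinOn hne hcont.continuousOn
    have hmin : ∀ w ∈ Metric.sphere (0:E) 1, ⟪w₀, M w₀⟫_ℝ ≤ ⟪w, M w⟫_ℝ := fun w hw => hmin' hw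
    have hw₀norm : ‖w₀‖ = 1 := by simpa using hw₀mem
    have hw₀ne : w₀ ≠ 0 := by intro h0; rw [h0] at hw₀norm; simp at hw₀norm
    refine ⟨⟪w₀, M w₀⟫_ℝ, h w₀ hw₀ne, fun w => ?_⟩
    rcases eq_or_ne w 0 with rfl | hw
    · simp
    · have hnw : (0:ℝ) < ‖w‖ := norm_pos_iff.mpr hw
      have humem : ‖w‖⁻¹ • w ∈ Metric.sphere (0:E) 1 := by
        simp [norm_smul, abs_of_pos (inv_pos.mpr hnw), inv_mul_cancel₀ hnw.ne']
      have := hmin _ humem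
      have hexp : ⟪‖w‖⁻¹ • w, M (‖w‖⁻¹ • w)⟫_ℝ = ‖w‖⁻¹ * ‖w‖⁻¹ * ⟪w, M w⟫_ℝ := by
        rw [map_smul, real_inner_smul_left, real_inner_smul_right]; ring
      rw [hexp] at this
      have h2 : ⟪w₀, M w₀⟫_ℝ * ‖w‖^2 ≤ ‖w‖⁻¹ * ‖w‖⁻¹ * ⟪w, M w⟫_ℝ * ‖w‖^2 :=
        mul_le_mul_of_nonneg_right this (by positivity)
      have key : ‖w‖⁻¹ * ‖w‖⁻¹ * ⟪w, M w⟫_ℝ * ‖w‖^2 = ⟪w, M w⟫_ℝ := by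
        rw [pow_two]
        field_simp
      linarith

end PD

section Conv

variable {E F : Type*} [NormedAddCommGroup E] [InnerProductSpace ℝ E]
  [NormedAddCommGroup F] [InnerProductSpace ℝ F]

lemma convE1 (A : E →L[ℝ] F) (c : ℝ) (hcne : c ≠ 0)
    (x0 x1 xs : E) (z0 z1 zs y0 y1 ys : F)
    (hx1 : A x1 = z1 + c⁻¹ • (y1 - y0)) (hxs : A xs = zs) :
    c * ⟪A x1 + (c⁻¹ • y0 - z0), A (xs - x1)⟫_ℝ
      + c * ⟪-z1 + (A x1 + c⁻¹ • y0), -(zs - z1)⟫_ℝ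
      + ⟪ys, A x1 - z1⟫_ℝ
    = c⁻¹ * ⟪ys - y1, y1 - y0⟫_ℝ + c * ⟪z1 - z0, zs - z1⟫_ℝ - ⟪z1 - z0, y1 - y0⟫_ℝ := by
  have e1 : A (xs - x1) = zs - (z1 + c⁻¹ • (y1 - y0)) := by rw [map_sub, hxs, hx1]
  rw [e1, hx1]
  simp only [inner_add_left, inner_add_right, inner_sub_left, inner_sub_right,
    inner_neg_left, inner_neg_right, real_inner_smul_left, real_inner_smul_right]
  field_simp
  ring

lemma convE2 (A : E →L[ℝ] F) (c : ℝ) (hcne : c ≠ 0)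
    (x1 x2 : E) (z1 z2 y0 y1 y2 : F)
    (hx1 : A x1 = z1 + c⁻¹ • (y1 - y0)) (hx2 : A x2 = z2 + c⁻¹ • (y2 - y1)) :
    c * ⟪-z1 + (A x1 + c⁻¹ • y0), -(z2 - z1)⟫_ℝ
      + c * ⟪-z2 + (A x2 + c⁻¹ • y1), -(z1 - z2)⟫_ℝ
    = ⟪y2 - y1, z2 - z1⟫_ℝ := by
  rw [hx1, hx2]
  simp only [inner_add_left, inner_add_right, inner_sub_left, inner_sub_right,
    inner_neg_left, inner_neg_right, real_inner_smul_left, real_inner_smul_right]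
  field_simp
  ring

lemma convE3 (A : E →L[ℝ] F) (c : ℝ) (hcne : c ≠ 0) (M₁ : E →L[ℝ] E)
    (x0 x1 x2 : E) (z0 z1 z2 y0 y1 y2 : F)
    (hx1 : A x1 = z1 + c⁻¹ • (y1 - y0)) (hx2 : A x2 = z2 + c⁻¹ • (y2 - y1)) :
    c * ⟪A x1 + (c⁻¹ • y0 - z0), A (x2 - x1)⟫_ℝ
      + c * ⟪A x2 + (c⁻¹ • y1 - z1), A (x1 - x2)⟫_ℝ
      + ⟪M₁ (x1 - x0), x2 - x1⟫_ℝ + ⟪M₁ (x2 - x1), x1 - x2⟫_ℝ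
    = ⟪-(y2 - y1) + c • ((z1 - z0) - (z2 - z1)),
        (z2 - z1) + c⁻¹ • ((y2 - y1) - (y1 - y0))⟫_ℝ
      + ⟪M₁ ((x1 - x0) - (x2 - x1)), x2 - x1⟫_ℝ := by
  have e1 : A (x2 - x1) = (z2 + c⁻¹ • (y2 - y1)) - (z1 + c⁻¹ • (y1 - y0)) := by
    rw [map_sub, hx1, hx2]
  have e2 : A (x1 - x2) = (z1 + c⁻¹ • (y1 - y0)) - (z2 + c⁻¹ • (y2 - y1)) := by
    rw [map_sub, hx1, hx2]
  rw [e1, e2, hx1, hx2, map_sub M₁ (x1 - x0) (x2 - x1)]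
  simp only [inner_add_left, inner_add_right, inner_sub_left, inner_sub_right,
    inner_neg_left, inner_neg_right, real_inner_smul_left, real_inner_smul_right]
  field_simp
  ring

end Conv


set_option maxHeartbeats 1600000 in
theorem stmt4 (n m : ℕ)
    (f : EuclideanSpace ℝ (Fin n) → EReal) (g : EuclideanSpace ℝ (Fin m) → EReal)
    (hfp : ERealProper f) (hfc : ERealConvex f) (hfl : LowerSemicontinuous f)
    (hgp : ERealProper g) (hgc : ERealConvex g) (hgl : LowerSemicontinuous g)
    (A : EuclideanSpace ℝ (Fin n) →L[ℝ] EuclideanSpace ℝ (Fin m))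
    (c : ℝ) (hc : 0 < c)
    (M₁ : EuclideanSpace ℝ (Fin n) →L[ℝ] EuclideanSpace ℝ (Fin n))
    (M₂ : EuclideanSpace ℝ (Fin m) →L[ℝ] EuclideanSpace ℝ (Fin m))
    (hM₁ : IsSplusOp M₁) (hM₂ : IsSplusOp M₂)
    (x : ℕ → EuclideanSpace ℝ (Fin n)) (z y : ℕ → EuclideanSpace ℝ (Fin m))
    (hx : ∀ k : ℕ, IsXUpdate f A c M₁ (x k) (z k) (y k) (x (k+1)))
    (hz : ∀ k : ℕ, IsZUpdate g c M₂ (A (x (k+1))) (z k) (y k) (z (k+1)))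
    (hy : ∀ k : ℕ, y (k+1) = y k + c • (A (x (k+1)) - z (k+1)))
    (hM₁pd : ∀ w : EuclideanSpace ℝ (Fin n), w ≠ 0 → 0 < ⟪w, M₁ w⟫_ℝ)
    (xs : EuclideanSpace ℝ (Fin n)) (zs ys : EuclideanSpace ℝ (Fin m))
    (hsp : IsSaddle (Lagr f g A) xs zs ys) :
    Summable (fun k : ℕ => ‖x (k+2) - x (k+1)‖ ^ 2) ∧
    Summable (fun k : ℕ => ‖y (k+2) - y (k+1)‖ ^ 2) ∧
    Summable (fun k : ℕ => ‖z (k+2) - z (k+1)‖ ^ 2) ∧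
    ∃ C : ℝ, 0 ≤ C ∧ ∀ k : ℕ, 1 ≤ k → ‖A (x k) - z k‖ ≤ C / Real.sqrt (k : ℝ) := by
  have hcne : c ≠ 0 := hc.ne'
  obtain ⟨x₀f, hx₀f⟩ := hfp.2
  obtain ⟨z₀g, hz₀g⟩ := hgp.2
  obtain ⟨r₀f, hr₀f⟩ := ereal_real (hfp.1 x₀f) hx₀f
  obtain ⟨r₀g, hr₀g⟩ := ereal_real (hgp.1 z₀g) hz₀g
  -- finiteness of f along iterates
  have hfx : ∀ k : ℕ, ∃ r : ℝ, f (x (k+1)) = (r : EReal) := by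
    intro k
    refine ereal_real (hfp.1 _) fun htop => ?_
    have hm := hx k x₀f
    rw [htop, hr₀f, EReal.top_add_of_ne_bot (EReal.coe_ne_bot _), ← EReal.coe_add] at hm
    exact (EReal.coe_ne_top _) (top_le_iff.mp hm)
  have hgz' : ∀ k : ℕ, ∃ r : ℝ, g (z (k+1)) = (r : EReal) := by
    intro k
    refine ereal_real (hgp.1 _) fun htop => ?_
    have hm := hz k z₀g
    rw [htop, hr₀g, EReal.top_add_of_ne_bot (EReal.coe_ne_bot _), ← EReal.coe_add] at hm
    exact (EReal.coe_ne_top _) (top_le_iff.mp hm)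
  choose rx hrx using hfx
  choose rz hrz using hgz'
  -- saddle point facts
  have hsaddle2 := fun p q => (hsp p q ys).2
  have hfxs : ∃ r : ℝ, f xs = (r : EReal) := by
    refine ereal_real (hfp.1 _) fun htop => ?_
    have hm := hsaddle2 x₀f z₀g
    rw [Lagr, Lagr, htop, hr₀f, hr₀g, EReal.top_add_of_ne_bot (hgp.1 zs),
      EReal.top_add_of_ne_bot (EReal.coe_ne_bot _), ← EReal.coe_add, ← EReal.coe_add] at hm
    exact (EReal.coe_ne_top _) (top_le_iff.mp hm)
  obtain ⟨rxs, hrxs⟩ := hfxs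
  have hgzs : ∃ r : ℝ, g zs = (r : EReal) := by
    refine ereal_real (hgp.1 _) fun htop => ?_
    have hm := hsaddle2 x₀f z₀g
    rw [Lagr, Lagr, htop, hr₀f, hr₀g, hrxs, EReal.add_top_of_ne_bot (EReal.coe_ne_bot _),
      EReal.top_add_of_ne_bot (EReal.coe_ne_bot _), ← EReal.coe_add, ← EReal.coe_add] at hm
    exact (EReal.coe_ne_top _) (top_le_iff.mp hm)
  obtain ⟨rzs, hrzs⟩ := hgzs
  have hAxs : A xs = zs := by
    have hv : ∀ v, ⟪v, A xs - zs⟫_ℝ ≤ ⟪ys, A xs - zs⟫_ℝ := by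
      intro v
      have h1 := (hsp xs zs v).1
      rw [Lagr, Lagr, hrxs, hrzs] at h1
      have h1' : rxs + rzs + ⟪v, A xs - zs⟫_ℝ ≤ rxs + rzs + ⟪ys, A xs - zs⟫_ℝ := by
        exact_mod_cast h1
      linarith
    have h2 := hv (ys + (A xs - zs))
    rw [inner_add_left] at h2
    have h3 : ⟪A xs - zs, A xs - zs⟫_ℝ ≤ 0 := by linarith
    have h4 : A xs - zs = 0 := by
      have h5 := real_inner_self_nonneg (x := A xs - zs)
      exact inner_self_eq_zero.mp (le_antisymm h3 h5)
    exact sub_eq_zero.mp h4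
  have hγ : ∀ k : ℕ, rxs + rzs ≤ rx k + rz k + ⟪ys, A (x (k+1)) - z (k+1)⟫_ℝ := by
    intro k
    have hm := hsaddle2 (x (k+1)) (z (k+1))
    rw [Lagr, Lagr, hrxs, hrzs, hrx k, hrz k, sub_eq_zero.mpr hAxs, inner_zero_right] at hm
    have hm' : rxs + rzs + (0:ℝ) ≤ rx k + rz k + ⟪ys, A (x (k+1)) - z (k+1)⟫_ℝ := by
      exact_mod_cast hm
    linarith
  -- subgradient inequalities
  have hxsub : ∀ (k : ℕ) (u : EuclideanSpace ℝ (Fin n)) (ru : ℝ), f u = (ru : EReal) →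
      rx k ≤ ru + (c * ⟪A (x (k+1)) + (c⁻¹ • y k - z k), A (u - x (k+1))⟫_ℝ
        + ⟪M₁ (x (k+1) - x k), u - x (k+1)⟫_ℝ) := by
    intro k u ru hu
    refine key_subgrad f hfc A (c⁻¹ • y k - z k) c hc M₁ hM₁ (x k) (x (k+1)) ?_ (hrx k) hu
    intro u'
    have hrw : ∀ v : EuclideanSpace ℝ (Fin n),
        A v - z k + c⁻¹ • y k = A v + (c⁻¹ • y k - z k) := fun v => by abel
    have := hx k u'
    rw [hrw (x (k+1)), hrw u'] at this
    exact this
  have hzsub : ∀ (k : ℕ) (w : EuclideanSpace ℝ (Fin m)) (rw' : ℝ), g w = (rw' : EReal) →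
      rz k ≤ rw' + (c * ⟪-(z (k+1)) + (A (x (k+1)) + c⁻¹ • y k), -(w - z (k+1))⟫_ℝ
        + ⟪M₂ (z (k+1) - z k), w - z (k+1)⟫_ℝ) := by
    intro k w rw' hw
    have hkey := key_subgrad g hgc (-(ContinuousLinearMap.id ℝ (EuclideanSpace ℝ (Fin m))))
      (A (x (k+1)) + c⁻¹ • y k) c hc M₂ hM₂ (z k) (z (k+1)) ?_ (hrz k) hw
    · simpa using hkey
    · intro w'
      have hrw : ∀ v : EuclideanSpace ℝ (Fin m),
          A (x (k+1)) - v + c⁻¹ • y k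
          = (-(ContinuousLinearMap.id ℝ (EuclideanSpace ℝ (Fin m)))) v
            + (A (x (k+1)) + c⁻¹ • y k) := fun v => by
        simp only [ContinuousLinearMap.neg_apply, ContinuousLinearMap.id_apply]; abel
      have := hz k w'
      rw [hrw (z (k+1)), hrw w'] at this
      exact this
  -- A substitution
  have hAx : ∀ k : ℕ, A (x (k+1)) = z (k+1) + c⁻¹ • (y (k+1) - y k) := by
    intro k
    have hd : y (k+1) - y k = c • (A (x (k+1)) - z (k+1)) := by rw [hy k]; abel
    rw [hd, smul_smul, inv_mul_cancel₀ hcne, one_smul]; abel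
  -- main descent inner-product inequality (h1)
  have h1 : ∀ k : ℕ, 0 ≤ c⁻¹ * ⟪ys - y (k+1), y (k+1) - y k⟫_ℝ
      + c * ⟪z (k+1) - z k, zs - z (k+1)⟫_ℝ - ⟪z (k+1) - z k, y (k+1) - y k⟫_ℝ
      + ⟪M₁ (x (k+1) - x k), xs - x (k+1)⟫_ℝ + ⟪M₂ (z (k+1) - z k), zs - z (k+1)⟫_ℝ := by
    intro k
    have hα := hxsub k xs rxs hrxs
    have hβ := hzsub k zs rzs hrzs
    have hγk := hγ k
    have hE1 := convE1 A c hcne (x k) (x (k+1)) xs (z k) (z (k+1)) zs (y k) (y (k+1)) ys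
      (hAx k) hAxs
    linarith
  -- z-monotonicity
  have hgzm : ∀ j : ℕ, 0 ≤ ⟪y (j+2) - y (j+1), z (j+2) - z (j+1)⟫_ℝ
      + ⟪M₂ (z (j+1) - z j), z (j+2) - z (j+1)⟫_ℝ
      - ⟪M₂ (z (j+2) - z (j+1)), z (j+2) - z (j+1)⟫_ℝ := by
    intro j
    have hδ1 := hzsub j (z (j+2)) (rz (j+1)) (hrz (j+1))
    have hδ2 := hzsub (j+1) (z (j+1)) (rz j) (hrz j)
    have hM2neg : ⟪M₂ (z (j+2) - z (j+1)), z (j+1) - z (j+2)⟫_ℝ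
        = -⟪M₂ (z (j+2) - z (j+1)), z (j+2) - z (j+1)⟫_ℝ := by
      rw [← inner_neg_right]; congr 1; abel
    have hE2 := convE2 A c hcne (x (j+1)) (x (j+2)) (z (j+1)) (z (j+2)) (y j) (y (j+1))
      (y (j+2)) (hAx j) (hAx (j+1))
    linarith
  -- x-monotonicity
  have hgxm : ∀ j : ℕ, 0 ≤ ⟪-(y (j+2) - y (j+1))
        + c • ((z (j+1) - z j) - (z (j+2) - z (j+1))),
        (z (j+2) - z (j+1)) + c⁻¹ • ((y (j+2) - y (j+1)) - (y (j+1) - y j))⟫_ℝ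
      + ⟪M₁ ((x (j+1) - x j) - (x (j+2) - x (j+1))), x (j+2) - x (j+1)⟫_ℝ := by
    intro j
    have hm1 := hxsub j (x (j+2)) (rx (j+1)) (hrx (j+1))
    have hm2 := hxsub (j+1) (x (j+1)) (rx j) (hrx j)
    have hE3 := convE3 A c hcne M₁ (x j) (x (j+1)) (x (j+2)) (z j) (z (j+1)) (z (j+2))
      (y j) (y (j+1)) (y (j+2)) (hAx j) (hAx (j+1))
    linarith
  -- Lyapunov functions
  have hidx : ∀ j : ℕ, j + 1 + 1 = j + 2 := fun j => rfl
  obtain ⟨W, hW0⟩ : ∃ W : ℕ → ℝ, ∀ j, W j = c⁻¹ * ‖y (j+1) - y j‖^2 + c * ‖z (j+1) - z j‖^2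
      + opSq M₁ (x (j+1) - x j) + opSq M₂ (z (j+1) - z j) := ⟨_, fun j => rfl⟩
  obtain ⟨V, hV0⟩ : ∃ V : ℕ → ℝ, ∀ j, V j = c⁻¹ * ‖ys - y (j+1)‖^2 + c * ‖zs - z (j+1)‖^2
      + opSq M₁ (xs - x (j+1)) + opSq M₂ (zs - z (j+1)) + opSq M₂ (z (j+1) - z j) :=
    ⟨_, fun j => rfl⟩
  have hW1 : ∀ j : ℕ, W (j+1) = c⁻¹ * ‖y (j+2) - y (j+1)‖^2 + c * ‖z (j+2) - z (j+1)‖^2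
      + opSq M₁ (x (j+2) - x (j+1)) + opSq M₂ (z (j+2) - z (j+1)) := by
    intro j; rw [hW0 (j+1)]
  have hV1 : ∀ j : ℕ, V (j+1) = c⁻¹ * ‖ys - y (j+2)‖^2 + c * ‖zs - z (j+2)‖^2
      + opSq M₁ (xs - x (j+2)) + opSq M₂ (zs - z (j+2)) + opSq M₂ (z (j+2) - z (j+1)) := by
    intro j; rw [hV0 (j+1)]
  have hWnn : ∀ j, 0 ≤ W j := by
    intro j
    rw [hW0 j]
    have o1 := opSq_nonneg hM₁ (x (j+1) - x j)
    have o2 := opSq_nonneg hM₂ (z (j+1) - z j)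
    have p1 : (0:ℝ) ≤ c⁻¹ * ‖y (j+1) - y j‖^2 := by positivity
    have p2 : (0:ℝ) ≤ c * ‖z (j+1) - z j‖^2 := by positivity
    linarith
  have hVnn : ∀ j, 0 ≤ V j := by
    intro j
    rw [hV0 j]
    have o1 := opSq_nonneg hM₁ (xs - x (j+1))
    have o2 := opSq_nonneg hM₂ (zs - z (j+1))
    have o3 := opSq_nonneg hM₂ (z (j+1) - z j)
    have p1 : (0:ℝ) ≤ c⁻¹ * ‖ys - y (j+1)‖^2 := by positivity
    have p2 : (0:ℝ) ≤ c * ‖zs - z (j+1)‖^2 := by positivity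
    linarith
  -- descent
  have hdescent : ∀ j : ℕ, V (j+1) + W (j+1) ≤ V j := by
    intro j
    have hcore := descent_core M₁ M₂ hM₁ hM₂ c hc
      (x (j+2) - x (j+1)) (xs - x (j+2))
      (y (j+2) - y (j+1)) (ys - y (j+2))
      (z (j+2) - z (j+1)) (zs - z (j+2)) (z (j+1) - z j)
      (h1 (j+1)) (hgzm j)
    rw [show y (j+2) - y (j+1) + (ys - y (j+2)) = ys - y (j+1) from by abel,
        show z (j+2) - z (j+1) + (zs - z (j+2)) = zs - z (j+1) from by abel,
        show x (j+2) - x (j+1) + (xs - x (j+2)) = xs - x (j+1) from by abel] at hcore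
    rw [hV1 j, hW1 j, hV0 j]
    linarith
  -- monotonicity of W
  have hmono : ∀ j : ℕ, W (j+1) ≤ W j := by
    intro j
    have hcore := mono_core M₁ M₂ hM₁ hM₂ c hc
      (x (j+1) - x j) (x (j+2) - x (j+1))
      (y (j+1) - y j) (y (j+2) - y (j+1))
      (z (j+1) - z j) (z (j+2) - z (j+1))
      (hgxm j) (hgzm j)
    rw [hW1 j, hW0 j]
    linarith
  have hanti : ∀ i j : ℕ, i ≤ j → W j ≤ W i := by
    intro i j hij
    induction j, hij using Nat.le_induction with
    | base => exact le_rfl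
    | succ p hp ih => exact le_trans (hmono p) ih
  -- telescoping
  have htel : ∀ N : ℕ, V N + ∑ j ∈ Finset.range N, W (j+1) ≤ V 0 := by
    intro N
    induction N with
    | zero => simp
    | succ N ih =>
      rw [Finset.sum_range_succ]
      have := hdescent N
      linarith
  have hWbound : ∀ N : ℕ, ∑ j ∈ Finset.range N, W (j+1) ≤ V 0 := fun N => by
    have := htel N; linarith [hVnn N]
  have hWsum : Summable (fun j : ℕ => W (j+1)) :=
    summable_of_sum_range_le (fun j => hWnn (j+1)) hWbound
  obtain ⟨α, hα, hαle⟩ := pd_uniform M₁ hM₁pd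
  refine ⟨?_, ?_, ?_, ?_⟩
  · -- x summability
    refine Summable.of_nonneg_of_le (fun k => by positivity) (fun k => ?_) (hWsum.mul_left α⁻¹)
    have hle1 : α * ‖x (k+2) - x (k+1)‖^2 ≤ opSq M₁ (x (k+2) - x (k+1)) :=
      hαle (x (k+2) - x (k+1))
    have hle2 : opSq M₁ (x (k+2) - x (k+1)) ≤ W (k+1) := by
      rw [hW1 k]
      have o2 := opSq_nonneg hM₂ (z (k+2) - z (k+1))
      have p1 : (0:ℝ) ≤ c⁻¹ * ‖y (k+2) - y (k+1)‖^2 := by positivity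
      have p2 : (0:ℝ) ≤ c * ‖z (k+2) - z (k+1)‖^2 := by positivity
      linarith
    calc ‖x (k+2) - x (k+1)‖^2 = α⁻¹ * (α * ‖x (k+2) - x (k+1)‖^2) := by
          field_simp
    _ ≤ α⁻¹ * W (k+1) :=
          mul_le_mul_of_nonneg_left (le_trans hle1 hle2) (inv_nonneg.mpr hα.le)
  · -- y summability
    refine Summable.of_nonneg_of_le (fun k => by positivity) (fun k => ?_) (hWsum.mul_left c)
    have hle2 : c⁻¹ * ‖y (k+2) - y (k+1)‖^2 ≤ W (k+1) := by
      rw [hW1 k]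
      have o1 := opSq_nonneg hM₁ (x (k+2) - x (k+1))
      have o2 := opSq_nonneg hM₂ (z (k+2) - z (k+1))
      have p2 : (0:ℝ) ≤ c * ‖z (k+2) - z (k+1)‖^2 := by positivity
      linarith
    calc ‖y (k+2) - y (k+1)‖^2 = c * (c⁻¹ * ‖y (k+2) - y (k+1)‖^2) := by
          field_simp
    _ ≤ c * W (k+1) := mul_le_mul_of_nonneg_left hle2 hc.le
  · -- z summability
    refine Summable.of_nonneg_of_le (fun k => by positivity) (fun k => ?_)
      (hWsum.mul_left c⁻¹)
    have hle2 : c * ‖z (k+2) - z (k+1)‖^2 ≤ W (k+1) := by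
      rw [hW1 k]
      have o1 := opSq_nonneg hM₁ (x (k+2) - x (k+1))
      have o2 := opSq_nonneg hM₂ (z (k+2) - z (k+1))
      have p1 : (0:ℝ) ≤ c⁻¹ * ‖y (k+2) - y (k+1)‖^2 := by positivity
      linarith
    calc ‖z (k+2) - z (k+1)‖^2 = c⁻¹ * (c * ‖z (k+2) - z (k+1)‖^2) := by
          field_simp
    _ ≤ c⁻¹ * W (k+1) := mul_le_mul_of_nonneg_left hle2 (inv_nonneg.mpr hc.le)
  · -- rate
    have hkW : ∀ k : ℕ, (k:ℝ) * W k ≤ V 0 := by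
      intro k
      have hle : ∀ j ∈ Finset.range k, W k ≤ W (j+1) := by
        intro j hj
        exact hanti (j+1) k (Nat.succ_le_of_lt (Finset.mem_range.mp hj))
      calc (k:ℝ) * W k = ∑ _j ∈ Finset.range k, W k := by
            rw [Finset.sum_const, Finset.card_range, nsmul_eq_mul]
      _ ≤ ∑ j ∈ Finset.range k, W (j+1) := Finset.sum_le_sum hle
      _ ≤ V 0 := hWbound k
    set C : ℝ := max (‖A (x 1) - z 1‖) (Real.sqrt (2 * V 0 / c)) with hC
    refine ⟨C, le_max_of_le_left (norm_nonneg _), ?_⟩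
    intro k hk
    rcases k with _ | k
    · omega
    rcases Nat.eq_zero_or_pos k with rfl | hkpos
    · -- k = 1
      simp only [show (0:ℕ)+1 = 1 from rfl, Nat.cast_one, Real.sqrt_one, div_one, hC]
      exact le_max_left _ _
    -- k + 1 with k ≥ 1
    have hkR : (1:ℝ) ≤ (k:ℝ) := by exact_mod_cast hkpos
    have hr : A (x (k+1)) - z (k+1) = c⁻¹ • (y (k+1) - y k) := by
      rw [hAx k]; abel
    have hrsq : ‖A (x (k+1)) - z (k+1)‖^2 ≤ c⁻¹ * W k := by
      rw [hr, norm_smul, Real.norm_eq_abs, abs_of_pos (inv_pos.mpr hc), mul_pow]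
      have hle2 : c⁻¹ * ‖y (k+1) - y k‖^2 ≤ W k := by
        rw [hW0 k]
        have o1 := opSq_nonneg hM₁ (x (k+1) - x k)
        have o2 := opSq_nonneg hM₂ (z (k+1) - z k)
        have p2 : (0:ℝ) ≤ c * ‖z (k+1) - z k‖^2 := by positivity
        linarith
      calc c⁻¹^2 * ‖y (k+1) - y k‖^2 = c⁻¹ * (c⁻¹ * ‖y (k+1) - y k‖^2) := by ring
      _ ≤ c⁻¹ * W k := mul_le_mul_of_nonneg_left hle2 (inv_nonneg.mpr hc.le)
    have hWk : W k ≤ V 0 / (k:ℝ) := by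
      rw [le_div_iff₀ (by linarith : (0:ℝ) < (k:ℝ))]
      have := hkW k; linarith [mul_comm (W k) ((k:ℝ))]
    have hV0nn := hVnn 0
    have hkey : c⁻¹ * (V 0 / (k:ℝ)) ≤ 2 * V 0 / c / ((k:ℝ) + 1) := by
      have e : 2 * V 0 / c / ((k:ℝ)+1) - c⁻¹ * (V 0 / k)
          = V 0 * ((k:ℝ) - 1) / (c * k * (k+1)) := by
        field_simp
        ring
      have : (0:ℝ) ≤ V 0 * ((k:ℝ) - 1) / (c * k * (k+1)) := by
        apply div_nonneg (mul_nonneg hV0nn (by linarith)) (by positivity)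
      linarith
    have hchain : ‖A (x (k+1)) - z (k+1)‖^2 ≤ 2 * V 0 / c / ((k:ℝ) + 1) := by
      have h2 : c⁻¹ * W k ≤ c⁻¹ * (V 0 / (k:ℝ)) :=
        mul_le_mul_of_nonneg_left hWk (inv_nonneg.mpr hc.le)
      linarith
    have hsq : ‖A (x (k+1)) - z (k+1)‖ ≤ Real.sqrt (2 * V 0 / c / ((k:ℝ) + 1)) := by
      rw [← Real.sqrt_sq (norm_nonneg (A (x (k+1)) - z (k+1)))]
      exact Real.sqrt_le_sqrt hchain
    have h2V : (0:ℝ) ≤ 2 * V 0 / c := div_nonneg (by linarith) hc.le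
    rw [Real.sqrt_div h2V ((k:ℝ)+1)] at hsq
    have hcast : ((k+1 : ℕ):ℝ) = (k:ℝ) + 1 := by push_cast; ring
    rw [hcast]
    refine le_trans hsq ?_
    have hspos : 0 < Real.sqrt ((k:ℝ)+1) := Real.sqrt_pos.mpr (by linarith)
    exact (div_le_div_iff_of_pos_right hspos).mpr (le_max_right _ _)
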